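/- Let (S,T) be a pair of random variables on {0,...,m} × {0,...,n}. Define G_{k,l} = E[(C(m,k) − C(S,k))(C(n,l) − C(T,l))] / (C(m−1,k−1) C(n−1,l−1)) for 1 ≤ k ≤ m, 1 ≤ l ≤ n. Then G_{k,l} equals ∑_{i=k}^{m} ∑_{j=l}^{n} C(i−1,k−1) C(j−1,l−1) P(S < i, T < j) / (C(m−1,k−1) C(n−1,l−1)), and G_{k,l} is non-increasing in k: G_{k,l} ≥ G_{k+1,l} for 1 ≤ k ≤ m−1. (Monotonicity of Gumbel's bound) -/

import Mathlib

open MeasureTheory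

/-- Hockey-stick style identity: for `1 ≤ k` and `s ≤ m`,
`C(m,k) - C(s,k) = ∑_{i=k}^{m} C(i-1,k-1) · 1_{s < i}` over the reals. -/
lemma gumbel_hockey (k : ℕ) (hk : 1 ≤ k) :
    ∀ m s : ℕ, s ≤ m →
      ((m.choose k : ℝ) - (s.choose k : ℝ)) =
        ∑ i ∈ Finset.Icc k m, ((i - 1).choose (k - 1) : ℝ) * (if s < i then 1 else 0) := by
  intro m
  induction m with
  | zero =>
    intro s hs
    have hs0 : s = 0 := by omega
    subst hs0
    rw [Finset.Icc_eq_empty (by omega : ¬ k ≤ 0)]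
    simp
  | succ m ih =>
    intro s hs
    by_cases hkm : k ≤ m + 1
    · rw [Finset.sum_Icc_succ_top hkm]
      rcases Nat.lt_or_ge s (m + 1) with hsm | hsm
      · have hs' : s ≤ m := by omega
        rw [← ih s hs']
        have hpascal : ((m + 1).choose k : ℝ) = (m.choose (k - 1) : ℝ) + (m.choose k : ℝ) := by
          have hkk : k = (k - 1) + 1 := by omega
          rw [hkk, Nat.choose_succ_succ]
          push_cast
          ring
        simp only [Nat.add_sub_cancel, if_pos hsm]
        rw [hpascal]
        ring
      · have hse : s = m + 1 := by omega
        subst hse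
        have hzero : ∀ i ∈ Finset.Icc k m, ((i - 1).choose (k - 1) : ℝ) * (if m + 1 < i then 1 else 0) = 0 := by
          intro i hi
          simp only [Finset.mem_Icc] at hi
          rw [if_neg (by omega)]
          ring
        rw [Finset.sum_eq_zero hzero]
        simp
    · have h1 : Finset.Icc k (m + 1) = ∅ := Finset.Icc_eq_empty (by omega)
      have h2 : (m + 1).choose k = 0 := Nat.choose_eq_zero_of_lt (by omega)
      have h3 : s.choose k = 0 := Nat.choose_eq_zero_of_lt (by omega)
      rw [h1, h2, h3]
      simp

/-- The key combinatorial inequality. -/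
lemma gumbel_nat_ineq (k i m : ℕ) (hk : 1 ≤ k) (h1 : k + 1 ≤ i) (h2 : i ≤ m) :
    (i - 1).choose k * (m - 1).choose (k - 1) ≤ (i - 1).choose (k - 1) * (m - 1).choose k := by
  have hkk : (k - 1) + 1 = k := by omega
  have e1 := Nat.choose_succ_right_eq (i - 1) (k - 1)
  have e2 := Nat.choose_succ_right_eq (m - 1) (k - 1)
  rw [hkk] at e1 e2
  apply Nat.le_of_mul_le_mul_right _ (show 0 < k by omega)
  calc (i - 1).choose k * (m - 1).choose (k - 1) * k
      = ((i - 1).choose k * k) * (m - 1).choose (k - 1) := by ring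
    _ = ((i - 1).choose (k - 1) * ((i - 1) - (k - 1))) * (m - 1).choose (k - 1) := by rw [e1]
    _ ≤ ((i - 1).choose (k - 1) * ((m - 1) - (k - 1))) * (m - 1).choose (k - 1) := by
        apply Nat.mul_le_mul_right
        apply Nat.mul_le_mul_left
        omega
    _ = (i - 1).choose (k - 1) * ((m - 1).choose (k - 1) * ((m - 1) - (k - 1))) := by ring
    _ = (i - 1).choose (k - 1) * ((m - 1).choose k * k) := by rw [e2]
    _ = (i - 1).choose (k - 1) * (m - 1).choose k * k := by ring

theorem gumbel_bound_repr_and_monotone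
    {Ω : Type*} [MeasurableSpace Ω] (μ : Measure Ω) [IsProbabilityMeasure μ]
    (m n : ℕ) (S T : Ω → ℕ) (hS : Measurable S) (hT : Measurable T)
    (hSm : ∀ᵐ ω ∂μ, S ω ≤ m) (hTn : ∀ᵐ ω ∂μ, T ω ≤ n)
    (G : ℕ → ℕ → ℝ)
    (hG : ∀ k l, G k l =
      (∫ ω, ((m.choose k : ℝ) - ((S ω).choose k)) *
          ((n.choose l : ℝ) - ((T ω).choose l)) ∂μ) /
        (((m - 1).choose (k - 1) : ℝ) * ((n - 1).choose (l - 1) : ℝ)))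
    (l : ℕ) (hl1 : 1 ≤ l) (hln : l ≤ n) :
    (∀ k, 1 ≤ k → k ≤ m →
        G k l =
          (∑ i ∈ Finset.Icc k m, ∑ j ∈ Finset.Icc l n,
              ((i - 1).choose (k - 1) : ℝ) * ((j - 1).choose (l - 1) : ℝ) *
                (μ {ω | S ω < i ∧ T ω < j}).toReal) /
            (((m - 1).choose (k - 1) : ℝ) * ((n - 1).choose (l - 1) : ℝ))) ∧
      (∀ k, 1 ≤ k → k + 1 ≤ m → G (k + 1) l ≤ G k l) := by
  -- measurable sets
  have hmeas : ∀ i j : ℕ, MeasurableSet {ω | S ω < i ∧ T ω < j} := by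
    intro i j
    exact (hS measurableSet_Iio).inter (hT measurableSet_Iio)
  -- integrability of each indicator term
  have hint : ∀ (k i j : ℕ),
      Integrable (fun ω => (((i - 1).choose (k - 1) : ℝ) * ((j - 1).choose (l - 1) : ℝ)) *
        (if S ω < i ∧ T ω < j then (1 : ℝ) else 0)) μ := by
    intro k i j
    have heq : (fun ω => (((i - 1).choose (k - 1) : ℝ) * ((j - 1).choose (l - 1) : ℝ)) *
        (if S ω < i ∧ T ω < j then (1 : ℝ) else 0))
        = Set.indicator {ω | S ω < i ∧ T ω < j}
            (fun _ => (((i - 1).choose (k - 1) : ℝ) * ((j - 1).choose (l - 1) : ℝ))) := by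
      ext ω
      rw [Set.indicator_apply]
      simp only [Set.mem_setOf_eq]
      by_cases h : S ω < i ∧ T ω < j
      · rw [if_pos h, if_pos h]; ring
      · rw [if_neg h, if_neg h]; ring
    rw [heq]
    exact (integrable_const _).indicator (hmeas i j)
  -- value of each integral
  have hval : ∀ (k i j : ℕ),
      (∫ ω, (((i - 1).choose (k - 1) : ℝ) * ((j - 1).choose (l - 1) : ℝ)) *
        (if S ω < i ∧ T ω < j then (1 : ℝ) else 0) ∂μ)
      = ((i - 1).choose (k - 1) : ℝ) * ((j - 1).choose (l - 1) : ℝ) *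
          (μ {ω | S ω < i ∧ T ω < j}).toReal := by
    intro k i j
    have heq : (fun ω => (((i - 1).choose (k - 1) : ℝ) * ((j - 1).choose (l - 1) : ℝ)) *
        (if S ω < i ∧ T ω < j then (1 : ℝ) else 0))
        = Set.indicator {ω | S ω < i ∧ T ω < j}
            (fun _ => (((i - 1).choose (k - 1) : ℝ) * ((j - 1).choose (l - 1) : ℝ))) := by
      ext ω
      rw [Set.indicator_apply]
      simp only [Set.mem_setOf_eq]
      by_cases h : S ω < i ∧ T ω < j
      · rw [if_pos h, if_pos h]; ring
      · rw [if_neg h, if_neg h]; ring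
    rw [heq, integral_indicator_const _ (hmeas i j), smul_eq_mul, measureReal_def]
    ring
  -- the main integral computation
  have key : ∀ k, 1 ≤ k →
      (∫ ω, ((m.choose k : ℝ) - ((S ω).choose k)) *
          ((n.choose l : ℝ) - ((T ω).choose l)) ∂μ)
      = ∑ i ∈ Finset.Icc k m, ∑ j ∈ Finset.Icc l n,
          ((i - 1).choose (k - 1) : ℝ) * ((j - 1).choose (l - 1) : ℝ) *
            (μ {ω | S ω < i ∧ T ω < j}).toReal := by
    intro k hk
    have hae : (fun ω => ((m.choose k : ℝ) - ((S ω).choose k)) *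
          ((n.choose l : ℝ) - ((T ω).choose l)))
        =ᵐ[μ] fun ω => ∑ i ∈ Finset.Icc k m, ∑ j ∈ Finset.Icc l n,
          (((i - 1).choose (k - 1) : ℝ) * ((j - 1).choose (l - 1) : ℝ)) *
            (if S ω < i ∧ T ω < j then (1 : ℝ) else 0) := by
      filter_upwards [hSm, hTn] with ω h1 h2
      rw [gumbel_hockey k hk m (S ω) h1, gumbel_hockey l hl1 n (T ω) h2,
        Finset.sum_mul_sum]
      apply Finset.sum_congr rfl
      intro i _
      apply Finset.sum_congr rfl
      intro j _
      by_cases hs : S ω < i <;> by_cases ht : T ω < j <;>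
        simp [hs, ht]
    rw [integral_congr_ae hae,
      integral_finset_sum _ (fun i _ => integrable_finset_sum _ (fun j _ => hint k i j))]
    apply Finset.sum_congr rfl
    intro i _
    rw [integral_finset_sum _ (fun j _ => hint k i j)]
    apply Finset.sum_congr rfl
    intro j _
    exact hval k i j
  -- Part 1
  have part1 : ∀ k, 1 ≤ k → k ≤ m →
      G k l =
        (∑ i ∈ Finset.Icc k m, ∑ j ∈ Finset.Icc l n,
            ((i - 1).choose (k - 1) : ℝ) * ((j - 1).choose (l - 1) : ℝ) *
              (μ {ω | S ω < i ∧ T ω < j}).toReal) /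
          (((m - 1).choose (k - 1) : ℝ) * ((n - 1).choose (l - 1) : ℝ)) := by
    intro k hk1 hkm
    rw [hG, key k hk1]
  refine ⟨part1, ?_⟩
  -- Part 2: monotonicity
  intro k hk1 hkm
  have hDk : (0 : ℝ) < ((m - 1).choose (k - 1) : ℝ) := by
    exact_mod_cast Nat.choose_pos (by omega)
  have hDk1 : (0 : ℝ) < ((m - 1).choose ((k + 1) - 1) : ℝ) := by
    exact_mod_cast Nat.choose_pos (by omega)
  have hE : (0 : ℝ) < ((n - 1).choose (l - 1) : ℝ) := by
    exact_mod_cast Nat.choose_pos (by omega)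
  rw [part1 k hk1 (by omega), part1 (k + 1) (by omega) hkm]
  rw [div_le_div_iff₀ (by positivity) (by positivity)]
  have hterm_nonneg : ∀ k' i : ℕ, 0 ≤ ∑ j ∈ Finset.Icc l n,
      ((i - 1).choose (k' - 1) : ℝ) * ((j - 1).choose (l - 1) : ℝ) *
        (μ {ω | S ω < i ∧ T ω < j}).toReal := by
    intro k' i
    apply Finset.sum_nonneg
    intro j _
    positivity
  have hmain : (∑ i ∈ Finset.Icc (k + 1) m, ∑ j ∈ Finset.Icc l n,
        ((i - 1).choose ((k + 1) - 1) : ℝ) * ((j - 1).choose (l - 1) : ℝ) *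
          (μ {ω | S ω < i ∧ T ω < j}).toReal) * ((m - 1).choose (k - 1) : ℝ)
      ≤ (∑ i ∈ Finset.Icc k m, ∑ j ∈ Finset.Icc l n,
        ((i - 1).choose (k - 1) : ℝ) * ((j - 1).choose (l - 1) : ℝ) *
          (μ {ω | S ω < i ∧ T ω < j}).toReal) * ((m - 1).choose ((k + 1) - 1) : ℝ) := by
    rw [Finset.sum_mul, Finset.sum_mul]
    have step1 : ∀ i ∈ Finset.Icc (k + 1) m,
        (∑ j ∈ Finset.Icc l n,
          ((i - 1).choose ((k + 1) - 1) : ℝ) * ((j - 1).choose (l - 1) : ℝ) *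
            (μ {ω | S ω < i ∧ T ω < j}).toReal) * ((m - 1).choose (k - 1) : ℝ)
        ≤ (∑ j ∈ Finset.Icc l n,
          ((i - 1).choose (k - 1) : ℝ) * ((j - 1).choose (l - 1) : ℝ) *
            (μ {ω | S ω < i ∧ T ω < j}).toReal) * ((m - 1).choose ((k + 1) - 1) : ℝ) := by
      intro i hi
      simp only [Finset.mem_Icc] at hi
      rw [Finset.sum_mul, Finset.sum_mul]
      apply Finset.sum_le_sum
      intro j _
      have hnat := gumbel_nat_ineq k i m hk1 hi.1 hi.2
      have hnat' : ((i - 1).choose ((k + 1) - 1) : ℝ) * ((m - 1).choose (k - 1) : ℝ)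
          ≤ ((i - 1).choose (k - 1) : ℝ) * ((m - 1).choose ((k + 1) - 1) : ℝ) := by
        simp only [Nat.add_sub_cancel]
        exact_mod_cast hnat
      have hnn : (0 : ℝ) ≤ ((j - 1).choose (l - 1) : ℝ) *
          (μ {ω | S ω < i ∧ T ω < j}).toReal := by positivity
      calc ((i - 1).choose ((k + 1) - 1) : ℝ) * ((j - 1).choose (l - 1) : ℝ) *
            (μ {ω | S ω < i ∧ T ω < j}).toReal * ((m - 1).choose (k - 1) : ℝ)
          = (((i - 1).choose ((k + 1) - 1) : ℝ) * ((m - 1).choose (k - 1) : ℝ)) *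
              (((j - 1).choose (l - 1) : ℝ) * (μ {ω | S ω < i ∧ T ω < j}).toReal) := by ring
        _ ≤ (((i - 1).choose (k - 1) : ℝ) * ((m - 1).choose ((k + 1) - 1) : ℝ)) *
              (((j - 1).choose (l - 1) : ℝ) * (μ {ω | S ω < i ∧ T ω < j}).toReal) :=
            mul_le_mul_of_nonneg_right hnat' hnn
        _ = ((i - 1).choose (k - 1) : ℝ) * ((j - 1).choose (l - 1) : ℝ) *
              (μ {ω | S ω < i ∧ T ω < j}).toReal * ((m - 1).choose ((k + 1) - 1) : ℝ) := by ring
    calc (∑ i ∈ Finset.Icc (k + 1) m,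
          (∑ j ∈ Finset.Icc l n,
            ((i - 1).choose ((k + 1) - 1) : ℝ) * ((j - 1).choose (l - 1) : ℝ) *
              (μ {ω | S ω < i ∧ T ω < j}).toReal) * ((m - 1).choose (k - 1) : ℝ))
        ≤ ∑ i ∈ Finset.Icc (k + 1) m,
          (∑ j ∈ Finset.Icc l n,
            ((i - 1).choose (k - 1) : ℝ) * ((j - 1).choose (l - 1) : ℝ) *
              (μ {ω | S ω < i ∧ T ω < j}).toReal) * ((m - 1).choose ((k + 1) - 1) : ℝ) :=
          Finset.sum_le_sum step1
      _ ≤ ∑ i ∈ Finset.Icc k m,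
          (∑ j ∈ Finset.Icc l n,
            ((i - 1).choose (k - 1) : ℝ) * ((j - 1).choose (l - 1) : ℝ) *
              (μ {ω | S ω < i ∧ T ω < j}).toReal) * ((m - 1).choose ((k + 1) - 1) : ℝ) := by
          apply Finset.sum_le_sum_of_subset_of_nonneg
          · exact Finset.Icc_subset_Icc (by omega) le_rfl
          · intro i _ _
            exact mul_nonneg (hterm_nonneg k i) (le_of_lt hDk1)
  calc (∑ i ∈ Finset.Icc (k + 1) m, ∑ j ∈ Finset.Icc l n,
        ((i - 1).choose ((k + 1) - 1) : ℝ) * ((j - 1).choose (l - 1) : ℝ) *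
          (μ {ω | S ω < i ∧ T ω < j}).toReal) *
        (((m - 1).choose (k - 1) : ℝ) * ((n - 1).choose (l - 1) : ℝ))
      = ((∑ i ∈ Finset.Icc (k + 1) m, ∑ j ∈ Finset.Icc l n,
        ((i - 1).choose ((k + 1) - 1) : ℝ) * ((j - 1).choose (l - 1) : ℝ) *
          (μ {ω | S ω < i ∧ T ω < j}).toReal) * ((m - 1).choose (k - 1) : ℝ)) *
          ((n - 1).choose (l - 1) : ℝ) := by ring
    _ ≤ ((∑ i ∈ Finset.Icc k m, ∑ j ∈ Finset.Icc l n,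
        ((i - 1).choose (k - 1) : ℝ) * ((j - 1).choose (l - 1) : ℝ) *
          (μ {ω | S ω < i ∧ T ω < j}).toReal) * ((m - 1).choose ((k + 1) - 1) : ℝ)) *
          ((n - 1).choose (l - 1) : ℝ) :=
        mul_le_mul_of_nonneg_right hmain (le_of_lt hE)
    _ = (∑ i ∈ Finset.Icc k m, ∑ j ∈ Finset.Icc l n,
        ((i - 1).choose (k - 1) : ℝ) * ((j - 1).choose (l - 1) : ℝ) *
          (μ {ω | S ω < i ∧ T ω < j}).toReal) *
        (((m - 1).choose ((k + 1) - 1) : ℝ) * ((n - 1).choose (l - 1) : ℝ)) := by ring
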